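/- For all real numbers k and τ: |k(e^(-iτ)+1) - √(1+k²)(e^(-iτ)-1)|² = 4(k² + sin²(τ/2)). Consequently, for k ≠ 0, the transmission coefficient T(k,τ) := 2k/(k(e^(iτ)+1) + √(1+k²)(e^(iτ)-1)) is well defined (the denominator is nonzero) and satisfies |T(k,τ)|² = k²/(k² + sin²(τ/2)). -/

import Mathlib

open Complex

theorem stmt12 (k τ : ℝ) :
    ‖((k : ℂ) * (Complex.exp (-(Complex.I * τ)) + 1)
        - ((Real.sqrt (1 + k ^ 2) : ℝ) : ℂ) * (Complex.exp (-(Complex.I * τ)) - 1))‖ ^ 2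
      = 4 * (k ^ 2 + Real.sin (τ / 2) ^ 2) ∧
    (k ≠ 0 →
      ((k : ℂ) * (Complex.exp (Complex.I * τ) + 1)
          + ((Real.sqrt (1 + k ^ 2) : ℝ) : ℂ) * (Complex.exp (Complex.I * τ) - 1)) ≠ 0 ∧
      ‖((2 * (k : ℂ)) /
          ((k : ℂ) * (Complex.exp (Complex.I * τ) + 1)
            + ((Real.sqrt (1 + k ^ 2) : ℝ) : ℂ) * (Complex.exp (Complex.I * τ) - 1)))‖ ^ 2
        = k ^ 2 / (k ^ 2 + Real.sin (τ / 2) ^ 2)) := by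
  set s := Real.sqrt (1 + k ^ 2) with hs
  have hs2 : s ^ 2 = 1 + k ^ 2 := Real.sq_sqrt (by positivity)
  have hsin : Real.sin (τ / 2) ^ 2 = (1 - Real.cos τ) / 2 := by
    have h1 := Real.cos_two_mul (τ / 2)
    have h2 := Real.sin_sq_add_cos_sq (τ / 2)
    rw [show 2 * (τ / 2) = τ by ring] at h1
    nlinarith
  have hpy : Real.sin τ ^ 2 = 1 - Real.cos τ ^ 2 := by
    nlinarith [Real.sin_sq_add_cos_sq τ]
  have he1 : Complex.exp (-(Complex.I * τ)) =
      (Real.cos τ : ℂ) - (Real.sin τ : ℂ) * Complex.I := by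
    rw [show -(Complex.I * (τ : ℂ)) = ((-τ : ℝ) : ℂ) * Complex.I by push_cast; ring,
      Complex.exp_mul_I, ← Complex.ofReal_cos, ← Complex.ofReal_sin,
      Real.cos_neg, Real.sin_neg]
    push_cast
    ring
  have he2 : Complex.exp (Complex.I * τ) =
      (Real.cos τ : ℂ) + (Real.sin τ : ℂ) * Complex.I := by
    rw [show Complex.I * (τ : ℂ) = ((τ : ℝ) : ℂ) * Complex.I by ring,
      Complex.exp_mul_I, ← Complex.ofReal_cos, ← Complex.ofReal_sin]
  have h1 : ‖(k : ℂ) * (Complex.exp (-(Complex.I * τ)) + 1)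
        - (s : ℂ) * (Complex.exp (-(Complex.I * τ)) - 1)‖ ^ 2
      = 4 * (k ^ 2 + Real.sin (τ / 2) ^ 2) := by
    rw [Complex.sq_norm, Complex.normSq_apply, he1, hsin]
    simp [Complex.add_re, Complex.add_im, Complex.sub_re, Complex.sub_im,
      Complex.mul_re, Complex.mul_im, Complex.cos_ofReal_re, Complex.sin_ofReal_re]
    linear_combination ((Real.cos τ - 1) ^ 2 + Real.sin τ ^ 2) * hs2 + (1 + 2 * k ^ 2 - 2 * k * s) * hpy
  have h2 : ‖(k : ℂ) * (Complex.exp (Complex.I * τ) + 1)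
        + (s : ℂ) * (Complex.exp (Complex.I * τ) - 1)‖ ^ 2
      = 4 * (k ^ 2 + Real.sin (τ / 2) ^ 2) := by
    rw [Complex.sq_norm, Complex.normSq_apply, he2, hsin]
    simp [Complex.add_re, Complex.add_im, Complex.sub_re, Complex.sub_im,
      Complex.mul_re, Complex.mul_im, Complex.cos_ofReal_re, Complex.sin_ofReal_re]
    linear_combination ((Real.cos τ - 1) ^ 2 + Real.sin τ ^ 2) * hs2 + (1 + 2 * k ^ 2 + 2 * k * s) * hpy
  refine ⟨h1, fun hk => ?_⟩
  have hpos : 0 < 4 * (k ^ 2 + Real.sin (τ / 2) ^ 2) := by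
    have : 0 < k ^ 2 := by positivity
    nlinarith [sq_nonneg (Real.sin (τ / 2))]
  have hne : ((k : ℂ) * (Complex.exp (Complex.I * τ) + 1)
      + (s : ℂ) * (Complex.exp (Complex.I * τ) - 1)) ≠ 0 := by
    intro h
    rw [h] at h2
    simp at h2
    nlinarith
  refine ⟨hne, ?_⟩
  rw [norm_div, div_pow, h2]
  have : ‖2 * (k : ℂ)‖ ^ 2 = 4 * k ^ 2 := by
    rw [norm_mul, mul_pow, Complex.norm_two, Complex.norm_real, Real.norm_eq_abs, _root_.sq_abs]
    ring
  rw [this]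
  have hd : k ^ 2 + Real.sin (τ / 2) ^ 2 ≠ 0 := by nlinarith
  field_simp
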